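/- Let q_1* ≈ -1.20458 be the unique real root of x^6 - x^4 - x^3 - 2x^2 - x - 1 in the interval (-1.3, -1.1). For every sequence (δ_i) ∈ {0,1}^ℕ, one has 1/q_1* + 1/(q_1*)^2 + (1/(q_1*)^7) Σ_{i=1}^∞ δ_i (q_1*)^{-i} < 1. -/

import Mathlib

/-- for the conjugate root q₁* ∈ (-1.3,-1.1) of x⁶-x⁴-x³-2x²-x-1,
the expression 1/q + 1/q² + q⁻⁷ Σ δᵢ q⁻ⁱ is always < 1. -/
theorem conjugate_root_bound (q : ℝ)
    (hq : q ∈ Set.Ioo (-1.3:ℝ) (-1.1) ∧ q^6 - q^4 - q^3 - 2*q^2 - q - 1 = 0)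
    (hqu : ∀ r : ℝ, r ∈ Set.Ioo (-1.3:ℝ) (-1.1) → r^6 - r^4 - r^3 - 2*r^2 - r - 1 = 0 → r = q) :
    ∀ δ : ℕ → ℕ, (∀ i, δ i = 0 ∨ δ i = 1) →
      1 / q + 1 / q^2 + (1 / q^7) * ∑' i : ℕ, (δ i : ℝ) / q ^ (i + 1) < 1 := by
  intro δ hδ
  -- Step 1: locate q in (-1.21, -1.2) via IVT and uniqueness
  have hcont : ContinuousOn (fun x : ℝ => x^6 - x^4 - x^3 - 2*x^2 - x - 1)
      (Set.Icc (-1.21) (-1.2)) := by fun_prop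
  have hIVT := intermediate_value_Ioo' (by norm_num : (-1.21:ℝ) ≤ -1.2) hcont
  have h0 : (0:ℝ) ∈ Set.Ioo ((fun x : ℝ => x^6 - x^4 - x^3 - 2*x^2 - x - 1) (-1.2))
      ((fun x : ℝ => x^6 - x^4 - x^3 - 2*x^2 - x - 1) (-1.21)) := by
    constructor <;> norm_num
  obtain ⟨r, hr, hr0⟩ := hIVT h0
  have hrq : r = q := hqu r ⟨by linarith [hr.1], by linarith [hr.2]⟩ hr0
  have hql : (-1.21:ℝ) < q := hrq ▸ hr.1
  have hqr : q < -1.2 := hrq ▸ hr.2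
  have hqneg : q < 0 := by linarith
  have hq65 : (6/5 : ℝ) ≤ -q := by linarith
  -- Step 2: bound the tsum below by -30/11
  set f : ℕ → ℝ := fun i => (δ i : ℝ) / q ^ (i + 1) with hf
  set g : ℕ → ℝ := fun i => if Even i then -((5/6:ℝ))^(i+1) else 0 with hg
  have habs : ∀ i, |f i| ≤ (5/6:ℝ)^(i+1) := by
    intro i
    have hδ1 : (δ i : ℝ) ≤ 1 := by rcases hδ i with h | h <;> simp [h]
    have hpow : (6/5:ℝ)^(i+1) ≤ (-q)^(i+1) := pow_le_pow_left₀ (by norm_num) hq65 _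
    have hqp : |q ^ (i+1)| = (-q)^(i+1) := by
      rw [abs_pow, abs_of_neg hqneg]
    have hpos : (0:ℝ) < (6/5:ℝ)^(i+1) := by positivity
    rw [hf]
    simp only [abs_div, Nat.abs_cast, hqp]
    calc (δ i : ℝ) / (-q)^(i+1) ≤ 1 / (6/5:ℝ)^(i+1) :=
          div_le_div₀ zero_le_one hδ1 hpos hpow
      _ = (5/6:ℝ)^(i+1) := by
          rw [one_div, ← inv_pow]; norm_num
  have hgabs : ∀ i, |g i| ≤ (5/6:ℝ)^(i+1) := by
    intro i
    simp only [hg]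
    by_cases h : Even i
    · rw [if_pos h, abs_neg, abs_of_nonneg (by positivity)]
    · rw [if_neg h, abs_zero]; positivity
  have hs0 : Summable (fun n : ℕ => (5/6:ℝ)^n) :=
    summable_geometric_of_lt_one (by norm_num) (by norm_num)
  have hsumgeo : Summable (fun i : ℕ => (5/6:ℝ)^(i+1)) :=
    (hs0.mul_left (5/6)).congr (fun i => by rw [pow_succ]; ring)
  have hfs : Summable f := Summable.of_abs (hsumgeo.of_nonneg_of_le (fun i => abs_nonneg _) habs)
  have hgs : Summable g := Summable.of_abs (hsumgeo.of_nonneg_of_le (fun i => abs_nonneg _) hgabs)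
  have hgle : ∀ i, g i ≤ f i := by
    intro i
    rw [hf, hg]
    by_cases h : Even i
    · simp only [h, if_true]
      have hodd : Odd (i+1) := h.add_one
      have hqlt : q ^ (i+1) < 0 := hodd.pow_neg hqneg
      rcases hδ i with h0 | h1
      · simp only [h0, Nat.cast_zero, zero_div]
        have : (0:ℝ) ≤ (5/6:ℝ)^(i+1) := by positivity
        linarith
      · simp only [h1, Nat.cast_one]
        have h1' : 1 / q ^ (i+1) = -(1 / (-q)^(i+1)) := by
          rw [hodd.neg_pow]; ring
        rw [h1', neg_le_neg_iff]
        have hpow : (6/5:ℝ)^(i+1) ≤ (-q)^(i+1) := pow_le_pow_left₀ (by norm_num) hq65 _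
        calc 1 / (-q)^(i+1) ≤ 1 / (6/5:ℝ)^(i+1) :=
              one_div_le_one_div_of_le (by positivity) hpow
          _ = (5/6:ℝ)^(i+1) := by rw [one_div, ← inv_pow]; norm_num
    · simp only [h, if_false]
      have heven : Even (i+1) := (Nat.not_even_iff_odd.mp h).add_one
      have : 0 < q ^ (i+1) := heven.pow_pos (ne_of_lt hqneg)
      positivity
  have hStsum : ∑' i, g i ≤ ∑' i, f i := Summable.tsum_le_tsum hgle hgs hfs
  have hgeven : ∀ k : ℕ, g (2*k) = -(5/6:ℝ) * ((25/36:ℝ))^k := by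
    intro k
    rw [hg]
    simp only [even_two_mul, if_pos]
    rw [pow_succ]
    rw [show (25/36:ℝ) = (5/6)^2 by norm_num, ← pow_mul]
    ring
  have hgodd : ∀ k : ℕ, g (2*k+1) = 0 := by
    intro k; rw [hg]; simp [Nat.even_add_one, parity_simps]
  have hse : Summable (fun k => g (2*k)) := by
    apply Summable.congr (((summable_geometric_of_lt_one (by norm_num) (by norm_num)).mul_left
      (-(5/6:ℝ)))) (fun k => (hgeven k).symm)
  have hso : Summable (fun k => g (2*k+1)) := by
    apply summable_zero.congr (fun k => (hgodd k).symm)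
  have htg : ∑' i, g i = -30/11 := by
    rw [← tsum_even_add_odd hse hso]
    rw [tsum_congr hgeven, tsum_congr hgodd]
    rw [tsum_mul_left, tsum_geometric_of_lt_one (by norm_num) (by norm_num), tsum_zero]
    norm_num
  have hS : (-30/11 : ℝ) ≤ ∑' i, f i := htg ▸ hStsum
  -- Step 3: conclude
  have hq7 : q ^ 7 < 0 := (by decide : Odd 7).pow_neg hqneg
  have hq7inv : (1:ℝ)/q^7 ≤ 0 := by
    apply div_nonpos_of_nonneg_of_nonpos <;> [norm_num; exact hq7.le]
  have h1 : (1/q^7) * ∑' i, f i ≤ (1/q^7) * (-30/11) :=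
    mul_le_mul_of_nonpos_left hS hq7inv
  have h2 : (1:ℝ)/q^7 * (-30/11) = 30/11 * (1/(-q)^7) := by
    rw [(by decide : Odd 7).neg_pow q]
    field_simp
  have h7 : (6/5:ℝ)^7 ≤ (-q)^7 := pow_le_pow_left₀ (by norm_num) hq65 7
  have h3 : (1:ℝ)/(-q)^7 ≤ 1/(6/5:ℝ)^7 := one_div_le_one_div_of_le (by norm_num) h7
  have h4 : (1/q^7) * ∑' i, f i ≤ 30/11 * (1/(6/5:ℝ)^7) := by
    rw [h2] at h1
    calc (1/q^7) * ∑' i, f i ≤ 30/11 * (1/(-q)^7) := h1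
      _ ≤ 30/11 * (1/(6/5:ℝ)^7) := by nlinarith
  have h5 : 1/q + 1/q^2 ≤ 0 := by
    have hq2 : (0:ℝ) < q^2 := by nlinarith
    have hne : q ≠ 0 := ne_of_lt hqneg
    have heq : 1/q + 1/q^2 = (q+1)/q^2 := by
      field_simp
    rw [heq]
    apply div_nonpos_of_nonpos_of_nonneg (by linarith) hq2.le
  have h6 : (30:ℝ)/11 * (1/(6/5:ℝ)^7) < 1 := by norm_num
  calc 1 / q + 1 / q^2 + (1 / q^7) * ∑' i : ℕ, (δ i : ℝ) / q ^ (i + 1)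
      ≤ 0 + 30/11 * (1/(6/5:ℝ)^7) := by
        exact add_le_add h5 h4
    _ < 1 := by linarith
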